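/- Let k ≥ 1, s ≥ 2 and 1 ≤ b ≤ k be integers, and let n be a positive integer. Suppose F is a family of k-element subsets of [n] such that for every choice of sets F₁, ..., F_s ∈ F (not necessarily distinct) one has |F₁ ∪ F₂ ∪ ⋯ ∪ F_s| ≤ ks − (b−1)(s−1) − 1. Then (s−1)^b · |σ_{k−b}(F)| ≥ |F|. -/

import Mathlib

open scoped Classical
open Finset
open scoped FinsetFamily

/-- The `ℓ`-shadow of a family `F` of subsets of `Fin n`: all `ℓ`-element sets contained
in some member of `F`. -/
noncomputable def shadow' (n ℓ : ℕ) (F : Finset (Finset (Fin n))) : Finset (Finset (Fin n)) :=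
  Finset.univ.filter fun G : Finset (Fin n) => G.card = ℓ ∧ ∃ A ∈ F, G ⊆ A


section FranklAux

noncomputable def shN (ℓ : ℕ) (F : Finset (Finset ℕ)) : Finset (Finset ℕ) :=
  (F.biUnion Finset.powerset).filter fun G => G.card = ℓ

lemma mem_shN {ℓ : ℕ} {F : Finset (Finset ℕ)} {G : Finset ℕ} :
    G ∈ shN ℓ F ↔ G.card = ℓ ∧ ∃ A ∈ F, G ⊆ A := by
  simp only [shN, mem_filter, mem_biUnion, Finset.mem_powerset]; tauto

def Hyp (s M : ℕ) (F : Finset (Finset ℕ)) : Prop :=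
  ∀ f : Fin s → Finset ℕ, (∀ i, f i ∈ F) → (Finset.univ.biUnion f).card ≤ M

def Shifted (F : Finset (Finset ℕ)) : Prop :=
  ∀ A ∈ F, ∀ i j : ℕ, i < j → j ∈ A → i ∉ A → insert i (A.erase j) ∈ F

lemma choose_bound (s1 m b x : ℕ) (hs1 : 1 ≤ s1) (hx : x ≤ s1 * m + (b - 1)) (hb : 1 ≤ b) :
    x.choose b ≤ s1 ^ b * (m + (b - 1)).choose b := by
  have h1 : x.choose b ≤ (s1 * m + (b - 1)).choose b := Nat.choose_le_choose b hx
  refine h1.trans ?_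
  -- descFactorial comparison
  have hdf : (s1 * m + (b - 1)).descFactorial b ≤ s1 ^ b * ((m + (b - 1)).descFactorial b) := by
    rw [Nat.descFactorial_eq_prod_range, Nat.descFactorial_eq_prod_range]
    calc ∏ i ∈ range b, (s1 * m + (b - 1) - i)
        ≤ ∏ i ∈ range b, (s1 * (m + (b - 1) - i)) := by
          refine Finset.prod_le_prod' ?_
          intro i hi
          rw [Finset.mem_range] at hi
          have h2 : s1 * m + (b - 1) - i = s1 * m + (b - 1 - i) := by omega
          have h3 : m + (b - 1) - i = m + (b - 1 - i) := by omega
          rw [h2, h3, Nat.mul_add]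
          have : b - 1 - i ≤ s1 * (b - 1 - i) := Nat.le_mul_of_pos_left _ hs1
          omega
      _ = s1 ^ b * ∏ i ∈ range b, (m + (b - 1) - i) := by
          rw [Finset.prod_mul_distrib, Finset.prod_const, Finset.card_range]
  rw [Nat.descFactorial_eq_factorial_mul_choose, Nat.descFactorial_eq_factorial_mul_choose] at hdf
  have := Nat.factorial_pos b
  calc (s1 * m + (b - 1)).choose b
      ≤ s1 ^ b * (m + (b - 1)).choose b := by
        refine Nat.le_of_mul_le_mul_left ?_ this
        calc b.factorial * (s1 * m + (b - 1)).choose b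
            ≤ s1 ^ b * (b.factorial * (m + (b - 1)).choose b) := hdf
          _ = b.factorial * (s1 ^ b * (m + (b - 1)).choose b) := by ring

lemma lym (k b n : ℕ) (hb : b ≤ k) (F : Finset (Finset ℕ))
    (hcard : ∀ A ∈ F, A.card = k) (hrange : ∀ A ∈ F, A ⊆ range n) :
    F.card * k.choose b ≤ (shN (k - b) F).card * ((n - (k - b)).choose b) := by
  classical
  set S := shN (k - b) F with hS
  -- each member of F has exactly C(k,b) shadows in S
  have key : ∀ A ∈ F, (S.filter (· ⊆ A)).card = k.choose b := by
    intro A hA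
    have hpc : S.filter (· ⊆ A) = A.powersetCard (k - b) := by
      ext G
      simp only [mem_filter, hS, mem_shN, mem_powersetCard]
      constructor
      · rintro ⟨⟨h1, _⟩, h2⟩; exact ⟨h2, h1⟩
      · rintro ⟨h1, h2⟩; exact ⟨⟨h2, A, hA, h1⟩, h1⟩
    rw [hpc, card_powersetCard, hcard A hA, Nat.choose_symm hb]
  -- each shadow is contained in at most C(n-(k-b), b) members of F
  have deg : ∀ G ∈ S, (F.filter (fun A => G ⊆ A)).card ≤ (n - (k - b)).choose b := by
    intro G hG
    rw [mem_shN] at hG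
    obtain ⟨hGc, A₀, hA₀, hGA₀⟩ := hG
    have hGr : G ⊆ range n := hGA₀.trans (hrange _ hA₀)
    have : (F.filter (fun A => G ⊆ A)).card ≤ ((range n \ G).powersetCard b).card := by
      refine Finset.card_le_card_of_injOn (fun A => A \ G) ?_ ?_
      · intro A hA
        rw [mem_coe, mem_filter] at hA
        simp only [mem_coe, mem_powersetCard]
        refine ⟨sdiff_subset_sdiff (hrange _ hA.1) le_rfl, ?_⟩
        rw [card_sdiff_of_subset hA.2, hcard _ hA.1, hGc]
        omega
      · intro A hA A' hA' hEq
        rw [mem_coe, mem_filter] at hA hA'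
        have : G ∪ (A \ G) = G ∪ (A' \ G) := by simp only at hEq; rw [hEq]
        rwa [Finset.union_sdiff_of_subset hA.2, Finset.union_sdiff_of_subset hA'.2] at this
    refine this.trans ?_
    rw [card_powersetCard, card_sdiff_of_subset hGr, card_range, hGc]
  -- double counting
  have swap : ∑ A ∈ F, (S.filter (· ⊆ A)).card = ∑ G ∈ S, (F.filter (fun A => G ⊆ A)).card := by
    simp only [card_filter]
    exact Finset.sum_comm
  calc F.card * k.choose b = ∑ A ∈ F, (S.filter (· ⊆ A)).card := by
        rw [Finset.sum_congr rfl key, Finset.sum_const, smul_eq_mul]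
    _ = ∑ G ∈ S, (F.filter (fun A => G ⊆ A)).card := swap
    _ ≤ ∑ _G ∈ S, (n - (k - b)).choose b := Finset.sum_le_sum deg
    _ = S.card * ((n - (k - b)).choose b) := by rw [Finset.sum_const, smul_eq_mul]


lemma compress_singleton {i j : ℕ} (hij : i ≠ j) (a : Finset ℕ) :
    UV.compress {i} {j} a = if j ∈ a ∧ i ∉ a then insert i (a.erase j) else a := by
  rw [UV.compress]
  by_cases h : Disjoint ({i} : Finset ℕ) a ∧ ({j} : Finset ℕ) ≤ a
  · rw [if_pos h, if_pos ⟨Finset.singleton_subset_iff.mp h.2,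
      Finset.disjoint_singleton_left.mp h.1⟩]
    ext x
    simp only [sup_eq_union, mem_sdiff, mem_union, mem_singleton, mem_insert, mem_erase]
    constructor
    · rintro ⟨hx | rfl, hxj⟩
      · exact Or.inr ⟨hxj, hx⟩
      · exact Or.inl rfl
    · rintro (rfl | ⟨hxj, hx⟩)
      · exact ⟨Or.inr rfl, hij⟩
      · exact ⟨Or.inl hx, hxj⟩
  · rw [if_neg h, if_neg]
    rintro ⟨hja, hia⟩
    exact h ⟨Finset.disjoint_singleton_left.mpr hia, Finset.singleton_subset_iff.mpr hja⟩

lemma mem_comp_cases {i j : ℕ} (hij : i < j) {F : Finset (Finset ℕ)} {a : Finset ℕ}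
    (ha : a ∈ 𝓒 {i} {j} F) :
    a ∈ F ∨ (a ∉ F ∧ i ∈ a ∧ j ∉ a ∧ insert j (a.erase i) ∈ F) := by
  rw [UV.mem_compression] at ha
  rcases ha with ⟨h1, _⟩ | ⟨h1, b, hb, hcomp⟩
  · exact Or.inl h1
  · rw [compress_singleton (Nat.ne_of_lt hij) b] at hcomp
    split_ifs at hcomp with hcond
    · subst hcomp
      refine Or.inr ⟨h1, mem_insert_self _ _, ?_, ?_⟩
      · simp only [mem_insert, mem_erase]
        rintro (h | ⟨h, _⟩) <;> [exact (Nat.ne_of_lt hij) h.symm; exact h rfl]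
      · rw [Finset.erase_insert (by simp [mem_erase, hcond.2]), Finset.insert_erase hcond.1]
        exact hb
    · subst hcomp; exact absurd hb h1

lemma mem_comp_of_j {i j : ℕ} (hij : i < j) {F : Finset (Finset ℕ)} {a : Finset ℕ}
    (ha : a ∈ 𝓒 {i} {j} F) (hja : j ∈ a) (hia : i ∉ a) :
    a ∈ F ∧ insert i (a.erase j) ∈ F := by
  rw [UV.mem_compression] at ha
  rcases ha with ⟨h1, h2⟩ | ⟨h1, b, hb, hcomp⟩
  · rw [compress_singleton (Nat.ne_of_lt hij) a, if_pos ⟨hja, hia⟩] at h2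
    exact ⟨h1, h2⟩
  · exfalso
    rw [compress_singleton (Nat.ne_of_lt hij) b] at hcomp
    split_ifs at hcomp with hcond
    · subst hcomp
      simp only [mem_insert, mem_erase] at hja
      rcases hja with h | ⟨h, _⟩
      · exact (Nat.ne_of_lt hij) h.symm
      · exact h rfl
    · subst hcomp; exact h1 hb

lemma card_le_helper1 {U U' : Finset ℕ} {i j : ℕ}
    (hsub : ∀ x ∈ U, x ≠ i → x ∈ U') (hj' : j ∈ U') (hjU : j ∉ U) : U.card ≤ U'.card := by
  have h1 : U.erase i ⊆ U'.erase j := by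
    intro x hx
    rw [mem_erase] at hx ⊢
    exact ⟨fun hxj => hjU (hxj ▸ hx.2), hsub x hx.2 hx.1⟩
  have h2 := Finset.card_le_card h1
  have h3 := Finset.card_erase_of_mem hj'
  have h4 := Finset.pred_card_le_card_erase (s := U) (a := i)
  have h5 : 1 ≤ U'.card := Finset.card_pos.mpr ⟨j, hj'⟩
  omega

lemma card_le_helper2 {U U' : Finset ℕ} {i j : ℕ} (hij : i ≠ j)
    (hsub : ∀ x ∈ U, x ≠ i → x ≠ j → x ∈ U') (hi : i ∈ U') (hj : j ∈ U') :
    U.card ≤ U'.card := by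
  have h1 : (U.erase i).erase j ⊆ (U'.erase i).erase j := by
    intro x hx
    simp only [mem_erase] at hx ⊢
    exact ⟨hx.1, hx.2.1, hsub x hx.2.2 hx.2.1 hx.1⟩
  have h2 := Finset.card_le_card h1
  have h3 := Finset.card_erase_of_mem hi
  have h4 := Finset.card_erase_of_mem ((Finset.mem_erase).mpr ⟨(Ne.symm hij), hj⟩)
  have h5 := Finset.pred_card_le_card_erase (s := U) (a := i)
  have h6 := Finset.pred_card_le_card_erase (s := U.erase i) (a := j)
  have h7 : 2 ≤ U'.card := by
    have : ({i, j} : Finset ℕ) ⊆ U' := by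
      intro x hx
      rcases Finset.mem_insert.mp hx with rfl | hx
      · exact hi
      · exact (Finset.mem_singleton.mp hx) ▸ hj
    have hc2 := Finset.card_le_card this
    rwa [Finset.card_pair hij] at hc2
  omega

lemma hyp_compression {i j s M : ℕ} (hij : i < j) {F : Finset (Finset ℕ)}
    (h : Hyp s M F) : Hyp s M (𝓒 {i} {j} F) := by
  classical
  intro f hf
  by_cases hD : ∀ t, f t ∈ F
  · exact h f hD
  push_neg at hD
  obtain ⟨t₁, ht₁⟩ := hD
  have fact : ∀ t, f t ∉ F → i ∈ f t ∧ j ∉ f t ∧ insert j ((f t).erase i) ∈ F := by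
    intro t ht
    rcases mem_comp_cases hij (hf t) with h1 | ⟨_, h2, h3, h4⟩
    · exact absurd h1 ht
    · exact ⟨h2, h3, h4⟩
  by_cases hjU : j ∈ Finset.univ.biUnion f
  · rw [mem_biUnion] at hjU
    obtain ⟨t₀, _, ht₀⟩ := hjU
    have hft₀F : f t₀ ∈ F := by
      by_contra hc
      exact (fact t₀ hc).2.1 ht₀
    by_cases hit₀ : i ∈ f t₀
    · -- keep everything; i is covered by f t₀
      set g : Fin s → Finset ℕ :=
        fun t => if f t ∈ F then f t else insert j ((f t).erase i) with hgdef
      have hg : ∀ t, g t ∈ F := by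
        intro t
        rw [hgdef]; dsimp only
        split_ifs with hc
        · exact hc
        · exact (fact t hc).2.2
      refine le_trans (Finset.card_le_card ?_) (h g hg)
      intro x hx
      rw [mem_biUnion] at hx ⊢
      obtain ⟨t, _, hx⟩ := hx
      by_cases hxi : x = i
      · subst hxi
        refine ⟨t₀, mem_univ _, ?_⟩
        rw [hgdef]; dsimp only; rw [if_pos hft₀F]; exact hit₀
      · refine ⟨t, mem_univ _, ?_⟩
        rw [hgdef]; dsimp only
        split_ifs with hc
        · exact hx
        · exact mem_insert_of_mem (mem_erase.mpr ⟨hxi, hx⟩)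
    · -- compress f t₀ to get i
      have ht₀c := (mem_comp_of_j hij (hf t₀) ht₀ hit₀).2
      set g : Fin s → Finset ℕ :=
        fun t => if t = t₀ then insert i ((f t₀).erase j)
          else if f t ∈ F then f t else insert j ((f t).erase i) with hgdef
      have hg : ∀ t, g t ∈ F := by
        intro t
        rw [hgdef]; dsimp only
        split_ifs with hc hc2
        · exact ht₀c
        · exact hc2
        · exact (fact t hc2).2.2
      refine le_trans (card_le_helper2 (Nat.ne_of_lt hij)
        (U' := Finset.univ.biUnion g) ?_ ?_ ?_) (h g hg)
      · intro x hx hxi hxj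
        rw [mem_biUnion] at hx ⊢
        obtain ⟨t, _, hx⟩ := hx
        refine ⟨t, mem_univ _, ?_⟩
        rw [hgdef]; dsimp only
        split_ifs with hc hc2
        · subst hc
          exact mem_insert_of_mem (mem_erase.mpr ⟨hxj, hx⟩)
        · exact hx
        · exact mem_insert_of_mem (mem_erase.mpr ⟨hxi, hx⟩)
      · rw [mem_biUnion]
        refine ⟨t₀, mem_univ _, ?_⟩
        rw [hgdef]; dsimp only; rw [if_pos rfl]
        exact mem_insert_self _ _
      · rw [mem_biUnion]
        refine ⟨t₁, mem_univ _, ?_⟩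
        have ht₁t₀ : t₁ ≠ t₀ := fun hc => ht₁ (hc ▸ hft₀F)
        rw [hgdef]; dsimp only; rw [if_neg ht₁t₀, if_neg ht₁]
        exact mem_insert_self _ _
  · -- j not in the union
    set g : Fin s → Finset ℕ :=
      fun t => if f t ∈ F then f t else insert j ((f t).erase i) with hgdef
    have hg : ∀ t, g t ∈ F := by
      intro t
      rw [hgdef]; dsimp only
      split_ifs with hc
      · exact hc
      · exact (fact t hc).2.2
    refine le_trans (card_le_helper1 (i := i) (j := j)
      (U' := Finset.univ.biUnion g) ?_ ?_ hjU) (h g hg)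
    · intro x hx hxi
      rw [mem_biUnion] at hx ⊢
      obtain ⟨t, _, hx⟩ := hx
      refine ⟨t, mem_univ _, ?_⟩
      rw [hgdef]; dsimp only
      split_ifs with hc
      · exact hx
      · exact mem_insert_of_mem (mem_erase.mpr ⟨hxi, hx⟩)
    · rw [mem_biUnion]
      refine ⟨t₁, mem_univ _, ?_⟩
      rw [hgdef]; dsimp only; rw [if_neg ht₁]
      exact mem_insert_self _ _

lemma iterate_shadow_comp (i j : ℕ) (b : ℕ) :
    ∀ F : Finset (Finset ℕ), (Finset.shadow)^[b] (𝓒 {i} {j} F) ⊆ 𝓒 {i} {j} ((Finset.shadow)^[b] F) := by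
  induction b with
  | zero => intro F; exact subset_rfl
  | succ b ihb =>
    intro F
    have huv : ∀ x ∈ ({i} : Finset ℕ), ∃ y ∈ ({j} : Finset ℕ),
        UV.IsCompressed (({i} : Finset ℕ).erase x) (({j} : Finset ℕ).erase y) F := by
      intro x hx
      refine ⟨j, mem_singleton_self j, ?_⟩
      rw [Finset.mem_singleton.mp hx, Finset.erase_singleton, Finset.erase_singleton]
      exact UV.isCompressed_self _ _
    calc (Finset.shadow)^[b+1] (𝓒 {i} {j} F)
        = (Finset.shadow)^[b] (Finset.shadow (𝓒 {i} {j} F)) := Function.iterate_succ_apply _ _ _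
      _ ⊆ (Finset.shadow)^[b] (𝓒 {i} {j} (Finset.shadow F)) := by
          exact (Finset.shadow_monotone.iterate b)
            (UV.shadow_compression_subset_compression_shadow _ _ huv)
      _ ⊆ 𝓒 {i} {j} ((Finset.shadow)^[b] (Finset.shadow F)) := ihb _
      _ = 𝓒 {i} {j} ((Finset.shadow)^[b+1] F) := by rw [← Function.iterate_succ_apply]

lemma shN_eq_iterate {k b : ℕ} {F : Finset (Finset ℕ)}
    (hcard : ∀ A ∈ F, A.card = k) (hb : b ≤ k) :
    shN (k - b) F = (Finset.shadow)^[b] F := by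
  ext G
  rw [mem_shN, Finset.mem_shadow_iterate_iff_exists_mem_card_add]
  constructor
  · rintro ⟨h1, A, hA, h2⟩
    exact ⟨A, hA, h2, by rw [hcard A hA, h1]; omega⟩
  · rintro ⟨A, hA, h2, h3⟩
    have h4 := hcard A hA
    exact ⟨by omega, A, hA, h2⟩

lemma comp_sized {i j k : ℕ} {F : Finset (Finset ℕ)} (hcard : ∀ A ∈ F, A.card = k) :
    ∀ A ∈ 𝓒 {i} {j} F, A.card = k := by
  have h : (↑(𝓒 {i} {j} F) : Set (Finset ℕ)).Sized k := by
    refine Set.Sized.uvCompression ?_ ?_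
    · simp
    · intro A hA; exact hcard A hA
  intro A hA
  exact h (by exact_mod_cast hA)

lemma shN_comp_le {i j k b : ℕ} (hij : i < j) (hb : b ≤ k) {F : Finset (Finset ℕ)}
    (hcard : ∀ A ∈ F, A.card = k) :
    (shN (k - b) (𝓒 {i} {j} F)).card ≤ (shN (k - b) F).card := by
  rw [shN_eq_iterate (comp_sized hcard) hb, shN_eq_iterate hcard hb]
  refine (Finset.card_le_card (iterate_shadow_comp i j b F)).trans ?_
  exact le_of_eq (UV.card_compression _ _ _)

lemma comp_range {i j n : ℕ} (hij : i < j) (hi : i < n) {F : Finset (Finset ℕ)}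
    (hrange : ∀ A ∈ F, A ⊆ range n) :
    ∀ A ∈ 𝓒 {i} {j} F, A ⊆ range n := by
  intro A hA
  rcases mem_comp_cases hij hA with h1 | ⟨_, h2, _, h4⟩
  · exact hrange A h1
  · intro x hx
    by_cases hxi : x = i
    · subst hxi; exact mem_range.mpr hi
    · have : x ∈ insert j (A.erase i) := mem_insert_of_mem (mem_erase.mpr ⟨hxi, hx⟩)
      exact hrange _ h4 this

noncomputable def fmeasure (F : Finset (Finset ℕ)) : ℕ := ∑ A ∈ F, ∑ x ∈ A, x

lemma measure_comp_lt {i j : ℕ} (hij : i < j) {F : Finset (Finset ℕ)}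
    (hne : 𝓒 {i} {j} F ≠ F) : fmeasure (𝓒 {i} {j} F) < fmeasure F := by
  classical
  set τ : Finset ℕ → Finset ℕ := UV.compress {i} {j} with hτ
  set Mv := F.filter (fun a => τ a ∉ F) with hMv
  set K := F.filter (fun a => τ a ∈ F) with hK
  have hMvne : Mv.Nonempty := by
    rw [Finset.nonempty_iff_ne_empty]
    intro hc
    apply hne
    have hall : ∀ a ∈ F, τ a ∈ F := by
      intro a ha
      by_contra hc'
      have : a ∈ Mv := by rw [hMv, mem_filter]; exact ⟨ha, hc'⟩
      rw [hc] at this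
      exact absurd this (Finset.notMem_empty a)
    ext a
    rw [UV.mem_compression]
    constructor
    · rintro (⟨h1, _⟩ | ⟨h1, b, hb, rfl⟩)
      · exact h1
      · exact hall b hb
    · intro ha
      exact Or.inl ⟨ha, hall a ha⟩
  have hsplit : 𝓒 {i} {j} F = K ∪ Mv.image τ := by
    ext a
    rw [UV.mem_compression]
    simp only [hK, hMv, mem_union, mem_filter, Finset.mem_image]
    constructor
    · rintro (⟨h1, h2⟩ | ⟨h1, b, hb, rfl⟩)
      · exact Or.inl ⟨h1, h2⟩
      · exact Or.inr ⟨b, ⟨hb, h1⟩, rfl⟩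
    · rintro (⟨h1, h2⟩ | ⟨b, ⟨hb, hτb⟩, rfl⟩)
      · exact Or.inl ⟨h1, h2⟩
      · exact Or.inr ⟨hτb, b, hb, rfl⟩
  have hdisj : Disjoint K (Mv.image τ) := by
    rw [Finset.disjoint_left]
    intro a haK haM
    rw [hK, mem_filter] at haK
    rw [Finset.mem_image] at haM
    obtain ⟨b, hb, rfl⟩ := haM
    rw [hMv, mem_filter] at hb
    exact hb.2 haK.1
  have hinj : ∀ x ∈ Mv, ∀ y ∈ Mv, τ x = τ y → x = y := by
    intro x hx y hy hxy
    refine UV.compress_injOn (s := F) ?_ ?_ hxy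
    · rw [hMv, mem_filter] at hx; simpa [hτ] using hx
    · rw [hMv, mem_filter] at hy; simpa [hτ] using hy
  have hlt : ∀ a ∈ Mv, (∑ x ∈ τ a, x) < ∑ x ∈ a, x := by
    intro a ha
    rw [hMv, mem_filter] at ha
    have hτne : τ a ≠ a := fun h => ha.2 (by rw [h]; exact ha.1)
    have hfired : j ∈ a ∧ i ∉ a := by
      by_contra hc
      apply hτne
      rw [hτ]
      rw [compress_singleton (Nat.ne_of_lt hij) a, if_neg hc]
    have heq : τ a = insert i (a.erase j) := by
      rw [hτ]
      rw [compress_singleton (Nat.ne_of_lt hij) a, if_pos hfired]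
    rw [heq, Finset.sum_insert (by simp [mem_erase, hfired.2])]
    have hsum := Finset.add_sum_erase a id hfired.1
    simp only [id] at hsum ⊢
    omega
  have e1 : fmeasure (𝓒 {i} {j} F) = (∑ a ∈ K, ∑ x ∈ a, x) + ∑ a ∈ Mv, ∑ x ∈ τ a, x := by
    rw [fmeasure, hsplit, Finset.sum_union hdisj, Finset.sum_image hinj]
  have e2 : fmeasure F = (∑ a ∈ K, ∑ x ∈ a, x) + ∑ a ∈ Mv, ∑ x ∈ a, x := by
    rw [fmeasure, ← Finset.sum_filter_add_sum_filter_not F (fun a => τ a ∈ F)]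
  have e3 : (∑ a ∈ Mv, ∑ x ∈ τ a, x) < ∑ a ∈ Mv, ∑ x ∈ a, x :=
    Finset.sum_lt_sum_of_nonempty hMvne hlt
  omega

lemma not_shifted_witness {F : Finset (Finset ℕ)} (h : ¬ Shifted F) :
    ∃ i j, i < j ∧ (∃ A ∈ F, j ∈ A) ∧ 𝓒 {i} {j} F ≠ F := by
  rw [Shifted] at h
  push_neg at h
  obtain ⟨A, hA, i, j, hij, hjA, hiA, hins⟩ := h
  refine ⟨i, j, hij, ⟨A, hA, hjA⟩, ?_⟩
  intro hEq
  have hA' : A ∈ 𝓒 {i} {j} F := by rw [hEq]; exact hA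
  rw [UV.mem_compression] at hA'
  rcases hA' with ⟨_, h2⟩ | ⟨h1, _⟩
  · rw [compress_singleton (Nat.ne_of_lt hij) A, if_pos ⟨hjA, hiA⟩] at h2
    exact hins h2
  · exact h1 hA

lemma exists_shifted (s M k b n : ℕ) (hb : b ≤ k) :
    ∀ (N : ℕ) (F : Finset (Finset ℕ)), fmeasure F ≤ N →
    (∀ A ∈ F, A.card = k) → (∀ A ∈ F, A ⊆ range n) → Hyp s M F →
    ∃ F', (∀ A ∈ F', A.card = k) ∧ (∀ A ∈ F', A ⊆ range n) ∧ Hyp s M F' ∧ Shifted F' ∧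
      F'.card = F.card ∧ (shN (k - b) F').card ≤ (shN (k - b) F).card := by
  intro N
  induction N with
  | zero =>
    intro F hμ h1 h2 h3
    by_cases hsh : Shifted F
    · exact ⟨F, h1, h2, h3, hsh, rfl, le_rfl⟩
    · obtain ⟨i, j, hij, _, hne⟩ := not_shifted_witness hsh
      have := measure_comp_lt hij hne
      omega
  | succ N ihN =>
    intro F hμ h1 h2 h3
    by_cases hsh : Shifted F
    · exact ⟨F, h1, h2, h3, hsh, rfl, le_rfl⟩
    · obtain ⟨i, j, hij, ⟨A, hA, hjA⟩, hne⟩ := not_shifted_witness hsh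
      have hlt := measure_comp_lt hij hne
      have hjn : j < n := mem_range.mp (h2 A hA hjA)
      have hin : i < n := lt_trans hij hjn
      obtain ⟨F', p1, p2, p3, p4, p5, p6⟩ := ihN (𝓒 {i} {j} F) (by omega)
        (comp_sized h1) (comp_range hij hin h2) (hyp_compression hij h3)
      exact ⟨F', p1, p2, p3, p4, p5.trans (UV.card_compression _ _ _),
        p6.trans (shN_comp_le hij hb h1)⟩

lemma lift_of_shifted {F : Finset (Finset ℕ)} (hS : Shifted F) {G : Finset ℕ} {m : ℕ}
    (hG : insert m G ∈ F) (hmG : m ∉ G) {x : ℕ} (hx : x < m) (hxG : x ∉ G) :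
    insert x G ∈ F := by
  have hxi : x ∉ insert m G := by
    simp only [mem_insert]
    rintro (rfl | h)
    · exact absurd rfl (Nat.ne_of_lt hx)
    · exact hxG h
  have := hS _ hG x m hx (mem_insert_self _ _) hxi
  rwa [Finset.erase_insert hmG] at this

lemma build_f {s m : ℕ} (hs : 2 ≤ s) {F : Finset (Finset ℕ)} (hS : Shifted F)
    {g : Fin s → Finset ℕ} (hgF : ∀ t, insert m (g t) ∈ F) (hgm : ∀ t, m ∉ g t)
    {W : Finset ℕ} (hWc : W.card ≤ s - 1) (hWm : ∀ x ∈ W, x < m)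
    (hWg : ∀ x ∈ W, ∀ t, x ∉ g t) :
    ∃ f : Fin s → Finset ℕ, (∀ t, f t ∈ F) ∧
      (Finset.univ.biUnion g) ∪ W ∪ {m} ⊆ Finset.univ.biUnion f := by
  classical
  have hWs : W.card < s := by omega
  set emb : {x // x ∈ W} → Fin s :=
    fun w => ⟨(W.equivFin w : ℕ), lt_of_lt_of_le (W.equivFin w).2 (le_of_lt hWs)⟩ with hemb
  have hembval : ∀ w, ((emb w : Fin s) : ℕ) < W.card := fun w => (W.equivFin w).2
  have hembinj : Function.Injective emb := by
    intro a b h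
    have hv := congrArg Fin.val h
    exact W.equivFin.injective (Fin.ext hv)
  set f : Fin s → Finset ℕ :=
    fun t => if h : ∃ w, emb w = t then insert (↑(h.choose) : ℕ) (g t) else insert m (g t)
    with hf
  have hfF : ∀ t, f t ∈ F := by
    intro t
    rw [hf]; dsimp only
    split_ifs with h
    · have hc := h.choose.2
      exact lift_of_shifted hS (hgF t) (hgm t) (hWm _ hc) (hWg _ hc t)
    · exact hgF t
  refine ⟨f, hfF, ?_⟩
  intro x hx
  simp only [mem_union, mem_singleton] at hx
  rw [mem_biUnion]
  rcases hx with (hx | hx) | rfl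
  · rw [mem_biUnion] at hx
    obtain ⟨t, _, hx⟩ := hx
    refine ⟨t, mem_univ _, ?_⟩
    rw [hf]; dsimp only
    split_ifs <;> exact mem_insert_of_mem hx
  · -- x ∈ W
    refine ⟨emb ⟨x, hx⟩, mem_univ _, ?_⟩
    rw [hf]; dsimp only
    have hex : ∃ w, emb w = emb ⟨x, hx⟩ := ⟨⟨x, hx⟩, rfl⟩
    rw [dif_pos hex]
    have : hex.choose = ⟨x, hx⟩ := hembinj hex.choose_spec
    rw [this]
    exact mem_insert_self _ _
  · -- m
    have hsm : s - 1 < s := by omega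
    refine ⟨⟨s - 1, hsm⟩, mem_univ _, ?_⟩
    rw [hf]; dsimp only
    rw [dif_neg]
    · exact mem_insert_self _ _
    · rintro ⟨w, hw⟩
      have := hembval w
      rw [hw] at this
      simp only at this
      omega

lemma hyp_F1 {s M m : ℕ} (hs : 2 ≤ s) {F : Finset (Finset ℕ)} (hS : Shifted F)
    (hhyp : Hyp s M F) (hMn : M < m + 1)
    {g : Fin s → Finset ℕ} (hg : ∀ t, insert m (g t) ∈ F ∧ g t ⊆ range m) :
    (Finset.univ.biUnion g).card + s ≤ M := by
  classical
  set U := Finset.univ.biUnion g with hUdef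
  have hUr : U ⊆ range m := by
    intro x hx
    rw [hUdef, mem_biUnion] at hx
    obtain ⟨t, _, hx⟩ := hx
    exact (hg t).2 hx
  have hmU : m ∉ U := fun h => absurd (mem_range.mp (hUr h)) (lt_irrefl m)
  have hmg : ∀ t, m ∉ g t := by
    intro t h
    exact absurd (mem_range.mp ((hg t).2 h)) (lt_irrefl m)
  set V := range m \ U with hV
  have hVfacts : ∀ x ∈ V, x < m ∧ ∀ t, x ∉ g t := by
    intro x hx
    rw [hV, mem_sdiff, mem_range] at hx
    refine ⟨hx.1, fun t hc => hx.2 ?_⟩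
    rw [hUdef, mem_biUnion]
    exact ⟨t, mem_univ _, hc⟩
  by_cases hVc : s - 1 ≤ V.card
  · obtain ⟨W, hWV, hWc⟩ := Finset.exists_subset_card_eq hVc
    obtain ⟨f, hfF, hsub⟩ := build_f hs hS (fun t => (hg t).1) hmg (le_of_eq hWc)
      (fun x hx => (hVfacts x (hWV hx)).1) (fun x hx => (hVfacts x (hWV hx)).2)
    have hcard : (U ∪ W ∪ {m}).card = U.card + (s - 1) + 1 := by
      rw [Finset.card_union_of_disjoint, Finset.card_union_of_disjoint, hWc,
        Finset.card_singleton]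
      · rw [Finset.disjoint_left]
        intro x hx
        rw [hV] at hWV
        exact fun hxW => (Finset.mem_sdiff.mp (hWV hxW)).2 hx
      · rw [Finset.disjoint_left]
        intro x hx hxm
        rw [Finset.mem_singleton] at hxm
        rcases Finset.mem_union.mp hx with h | h
        · rw [hxm] at h; exact hmU h
        · rw [hxm] at h
          exact absurd (mem_range.mp (Finset.mem_sdiff.mp (hWV h)).1) (lt_irrefl m)
    have h1 := hhyp f hfF
    rw [← hUdef] at hsub
    have h2 := Finset.card_le_card hsub
    omega
  · push_neg at hVc
    exfalso
    obtain ⟨f, hfF, hsub⟩ := build_f hs hS (fun t => (hg t).1) hmg (by omega)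
      (fun x hx => (hVfacts x hx).1) (fun x hx => (hVfacts x hx).2)
    have hcover : range (m + 1) ⊆ U ∪ V ∪ {m} := by
      intro x hx
      rw [mem_range] at hx
      simp only [mem_union, mem_singleton]
      by_cases hxm : x = m
      · exact Or.inr hxm
      · have : x ∈ range m := mem_range.mpr (by omega)
        by_cases hxU : x ∈ U
        · exact Or.inl (Or.inl hxU)
        · exact Or.inl (Or.inr (by rw [hV, mem_sdiff]; exact ⟨this, hxU⟩))
    have h1 := hhyp f hfF
    have h2 := Finset.card_le_card (hcover.trans hsub)
    rw [Finset.card_range] at h2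
    omega

lemma bk_contra {s M k m : ℕ} (hs : 2 ≤ s) {F : Finset (Finset ℕ)} (hS : Shifted F)
    (hhyp : Hyp s M F) (hMn : M < m + 1) (hMk : M = k + s - 2) (hk : 1 ≤ k)
    {G : Finset ℕ} (hGF : insert m G ∈ F) (hGm : m ∉ G) (hGc : G.card = k - 1)
    (hGr : G ⊆ range m) : False := by
  classical
  set V := range m \ G with hV
  have hVfacts : ∀ x ∈ V, x < m ∧ ∀ _t : Fin s, x ∉ G := by
    intro x hx
    rw [hV, mem_sdiff, mem_range] at hx
    exact ⟨hx.1, fun _ => hx.2⟩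
  have hUG : Finset.univ.biUnion (fun _ : Fin s => G) = G := by
    ext x
    rw [mem_biUnion]
    constructor
    · rintro ⟨_, _, h⟩; exact h
    · intro h; exact ⟨⟨0, by omega⟩, mem_univ _, h⟩
  by_cases hVc : s - 1 ≤ V.card
  · obtain ⟨W, hWV, hWc⟩ := Finset.exists_subset_card_eq hVc
    obtain ⟨f, hfF, hsub⟩ := build_f hs hS (g := fun _ => G) (fun _ => hGF) (fun _ => hGm)
      (le_of_eq hWc) (fun x hx => (hVfacts x (hWV hx)).1) (fun x hx => (hVfacts x (hWV hx)).2)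
    rw [hUG] at hsub
    have hcard : (G ∪ W ∪ {m}).card = (k - 1) + (s - 1) + 1 := by
      rw [Finset.card_union_of_disjoint, Finset.card_union_of_disjoint, hWc,
        Finset.card_singleton, hGc]
      · rw [Finset.disjoint_left]
        intro x hx hxW
        rw [hV] at hWV
        exact (Finset.mem_sdiff.mp (hWV hxW)).2 hx
      · rw [Finset.disjoint_left]
        intro x hx hxm
        rw [Finset.mem_singleton] at hxm
        rcases Finset.mem_union.mp hx with h | h
        · rw [hxm] at h; exact absurd (mem_range.mp (hGr h)) (lt_irrefl m)
        · rw [hxm] at h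
          exact absurd (mem_range.mp (Finset.mem_sdiff.mp (hWV h)).1) (lt_irrefl m)
    have h1 := hhyp f hfF
    have h2 := Finset.card_le_card hsub
    omega
  · push_neg at hVc
    obtain ⟨f, hfF, hsub⟩ := build_f hs hS (g := fun _ => G) (fun _ => hGF) (fun _ => hGm)
      (W := V) (by omega) (fun x hx => (hVfacts x hx).1) (fun x hx => (hVfacts x hx).2)
    rw [hUG] at hsub
    have hcover : range (m + 1) ⊆ G ∪ V ∪ {m} := by
      intro x hx
      rw [mem_range] at hx
      simp only [mem_union, mem_singleton]
      by_cases hxm : x = m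
      · exact Or.inr hxm
      · have hxr : x ∈ range m := mem_range.mpr (by omega)
        by_cases hxG : x ∈ G
        · exact Or.inl (Or.inl hxG)
        · exact Or.inl (Or.inr (by rw [hV, mem_sdiff]; exact ⟨hxr, hxG⟩))
    have h1 := hhyp f hfF
    have h2 := Finset.card_le_card (hcover.trans hsub)
    rw [Finset.card_range] at h2
    omega

lemma shN_mono {ℓ : ℕ} {F F' : Finset (Finset ℕ)} (h : F ⊆ F') : shN ℓ F ⊆ shN ℓ F' := by
  intro G hG
  rw [mem_shN] at hG ⊢
  obtain ⟨h1, A, hA, h2⟩ := hG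
  exact ⟨h1, A, h hA, h2⟩

theorem main : ∀ (N k b n s : ℕ) (F : Finset (Finset ℕ)), k + n ≤ N → 2 ≤ s → 1 ≤ b → b ≤ k →
    (∀ A ∈ F, A.card = k) → (∀ A ∈ F, A ⊆ range n) → Shifted F →
    Hyp s ((s - 1) * (k - b + 1) + (k - 1)) F →
    F.card ≤ (s - 1) ^ b * (shN (k - b) F).card := by
  intro N
  induction N with
  | zero => intro k b n s F hN hs hb1 hbk; omega
  | succ N ihN =>
    intro k b n s F hN hs hb1 hbk hcard hrange hshift hhyp
    set M := (s - 1) * (k - b + 1) + (k - 1) with hM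
    by_cases hnM : n ≤ M
    · -- LYM base case
      have hly := lym k b n hbk F hcard hrange
      have hcb : (n - (k - b)).choose b ≤ (s - 1) ^ b * k.choose b := by
        have hx : n - (k - b) ≤ (s - 1) * (k - b + 1) + (b - 1) := by
          have hP : (0:ℕ) ≤ (s - 1) * (k - b + 1) := Nat.zero_le _
          omega
        have := choose_bound (s - 1) (k - b + 1) b (n - (k - b)) (by omega) hx hb1
        have hkk : k - b + 1 + (b - 1) = k := by omega
        rwa [hkk] at this
      have hchain : F.card * k.choose b ≤ ((s - 1) ^ b * (shN (k - b) F).card) * k.choose b := by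
        calc F.card * k.choose b
            ≤ (shN (k - b) F).card * ((n - (k - b)).choose b) := hly
          _ ≤ (shN (k - b) F).card * ((s - 1) ^ b * k.choose b) :=
              Nat.mul_le_mul_left _ hcb
          _ = ((s - 1) ^ b * (shN (k - b) F).card) * k.choose b := by ring
      exact Nat.le_of_mul_le_mul_right hchain (Nat.choose_pos hbk)
    · -- induction step
      push_neg at hnM
      obtain ⟨m, rfl⟩ : ∃ m, n = m + 1 := ⟨n - 1, by omega⟩
      set F₀ := F.filter (fun A => m ∉ A) with hF₀
      set F₁ := (F.filter (fun A => m ∈ A)).image (fun A => A.erase m) with hF₁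
      have hF₁mem : ∀ G ∈ F₁, insert m G ∈ F ∧ m ∉ G ∧ G.card = k - 1 ∧ G ⊆ range m := by
        intro G hG
        rw [hF₁, Finset.mem_image] at hG
        obtain ⟨A, hA, rfl⟩ := hG
        rw [mem_filter] at hA
        have hmA : m ∈ A := hA.2
        have hins : insert m (A.erase m) = A := Finset.insert_erase hmA
        refine ⟨by rw [hins]; exact hA.1, Finset.notMem_erase m A, ?_, ?_⟩
        · rw [Finset.card_erase_of_mem hmA, hcard A hA.1]
        · intro x hx
          rw [mem_erase] at hx
          have := hrange A hA.1 hx.2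
          rw [mem_range] at this ⊢
          omega
      have hcard01 : F.card = F₀.card + F₁.card := by
        have h1 := Finset.card_filter_add_card_filter_not (s := F)
          (p := fun A => m ∈ A)
        have h2 : F₁.card = (F.filter (fun A => m ∈ A)).card := by
          rw [hF₁]
          apply Finset.card_image_of_injOn
          intro A hA B hB hAB
          rw [mem_coe, mem_filter] at hA hB
          simp only at hAB
          rw [← Finset.insert_erase hA.2, hAB, Finset.insert_erase hB.2]
        rw [hF₀]
        omega
      by_cases hF1e : F₁ = ∅
      · -- no set contains m
        have hall : ∀ A ∈ F, A ⊆ range m := by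
          intro A hA
          have hmA : m ∉ A := by
            intro hm
            have : A.erase m ∈ F₁ := by
              rw [hF₁, Finset.mem_image]
              exact ⟨A, mem_filter.mpr ⟨hA, hm⟩, rfl⟩
            rw [hF1e] at this
            exact absurd this (Finset.notMem_empty _)
          intro x hx
          have := hrange A hA hx
          rw [mem_range] at this ⊢
          have hxm : x ≠ m := fun hc => hmA (hc ▸ hx)
          omega
        exact ihN k b m s F (by omega) hs hb1 hbk hcard hall hshift hhyp
      · obtain ⟨G₀, hG₀⟩ := Finset.nonempty_iff_ne_empty.mpr hF1e
        by_cases hbk' : b = k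
        · exfalso
          obtain ⟨hG₀F, hG₀m, hG₀c, hG₀r⟩ := hF₁mem G₀ hG₀
          refine bk_contra hs hshift hhyp (by omega) ?_ (by omega) hG₀F hG₀m hG₀c hG₀r
          rw [hM, hbk']
          have : k - k + 1 = 1 := by omega
          rw [this, mul_one]
          omega
        · have hbk2 : b ≤ k - 1 := by omega
          have hk2 : 2 ≤ k := by omega
          -- F₀ facts
          have hcard₀ : ∀ A ∈ F₀, A.card = k := fun A hA => hcard A (filter_subset _ _ hA)
          have hrange₀ : ∀ A ∈ F₀, A ⊆ range m := by
            intro A hA x hx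
            rw [hF₀, mem_filter] at hA
            have := hrange A hA.1 hx
            rw [mem_range] at this ⊢
            have hxm : x ≠ m := fun hc => hA.2 (hc ▸ hx)
            omega
          have hshift₀ : Shifted F₀ := by
            intro A hA i j hij hj hi
            rw [hF₀, mem_filter] at hA ⊢
            refine ⟨hshift A hA.1 i j hij hj hi, ?_⟩
            simp only [mem_insert, mem_erase]
            rintro (heq | ⟨_, hmA⟩)
            · have hjm := hrange₀ A (by rw [hF₀, mem_filter]; exact hA) hj
              rw [mem_range] at hjm
              omega
            · exact hA.2 hmA
          have hhyp₀ : Hyp s M F₀ := fun f hf => hhyp f (fun t => filter_subset _ _ (hf t))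
          have h₀ := ihN k b m s F₀ (by omega) hs hb1 hbk hcard₀ hrange₀ hshift₀ hhyp₀
          -- F₁ facts
          have hcard₁ : ∀ G ∈ F₁, G.card = k - 1 := fun G hG => (hF₁mem G hG).2.2.1
          have hrange₁ : ∀ G ∈ F₁, G ⊆ range m := fun G hG => (hF₁mem G hG).2.2.2
          have hshift₁ : Shifted F₁ := by
            intro G hG i j hij hj hi
            obtain ⟨hGF, hGm, _, hGr⟩ := hF₁mem G hG
            have hjm : j < m := mem_range.mp (hGr hj)
            have him : i < m := lt_trans hij hjm
            have hiA : i ∉ insert m G := by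
              simp only [mem_insert]
              rintro (heq | h)
              · omega
              · exact hi h
            have hA' := hshift _ hGF i j hij (mem_insert_of_mem hj) hiA
            have hrw : insert i ((insert m G).erase j) = insert m (insert i (G.erase j)) := by
              rw [Finset.erase_insert_of_ne (fun hc => by omega : m ≠ j), Finset.insert_comm]
            rw [hrw] at hA'
            rw [hF₁, Finset.mem_image]
            have hmm : m ∉ insert i (G.erase j) := by
              simp only [mem_insert, mem_erase]
              rintro (heq | ⟨_, h⟩)
              · omega
              · exact hGm h
            refine ⟨insert m (insert i (G.erase j)), mem_filter.mpr ⟨hA', mem_insert_self _ _⟩, ?_⟩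
            rw [Finset.erase_insert hmm]
          have hhyp₁ : Hyp s ((s - 1) * (k - 1 - b + 1) + (k - 1 - 1)) F₁ := by
            intro g hg
            have hkey := hyp_F1 hs hshift hhyp (show M < m + 1 from hnM)
              (g := g) (fun t => ⟨(hF₁mem _ (hg t)).1, (hF₁mem _ (hg t)).2.2.2⟩)
            have he1 : k - 1 - b + 1 = k - b := by omega
            rw [he1]
            have he2 : M = (s - 1) * (k - b) + (s - 1) + (k - 1) := by
              rw [hM]
              have : k - b + 1 = (k - b) + 1 := rfl
              rw [this, Nat.mul_succ]
            have hP : (0:ℕ) ≤ (s-1) * (k-b) := Nat.zero_le _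
            omega
          have h₁ := ihN (k - 1) b m s F₁ (by omega) hs hb1 hbk2 hcard₁ hrange₁ hshift₁ hhyp₁
          -- shadow inequality
          have hsub0 : shN (k - b) F₀ ⊆ shN (k - b) F := shN_mono (filter_subset _ _)
          have hsub1 : (shN (k - 1 - b) F₁).image (insert m) ⊆ shN (k - b) F := by
            intro G hG
            rw [Finset.mem_image] at hG
            obtain ⟨H, hH, rfl⟩ := hG
            rw [mem_shN] at hH ⊢
            obtain ⟨hHc, G', hG', hHG'⟩ := hH
            obtain ⟨hG'F, hG'm, _, _⟩ := hF₁mem G' hG'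
            have hmH : m ∉ H := fun h => hG'm (hHG' h)
            refine ⟨by rw [Finset.card_insert_of_notMem hmH, hHc]; omega,
              insert m G', hG'F, Finset.insert_subset_insert _ hHG'⟩
          have hdisj : Disjoint (shN (k - b) F₀) ((shN (k - 1 - b) F₁).image (insert m)) := by
            rw [Finset.disjoint_left]
            intro G hG0 hG1
            rw [mem_shN] at hG0
            obtain ⟨_, A, hA, hGA⟩ := hG0
            rw [hF₀, mem_filter] at hA
            have hmG : m ∉ G := fun h => hA.2 (hGA h)
            rw [Finset.mem_image] at hG1
            obtain ⟨H, _, rfl⟩ := hG1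
            exact hmG (mem_insert_self _ _)
          have himgcard : ((shN (k - 1 - b) F₁).image (insert m)).card
              = (shN (k - 1 - b) F₁).card := by
            apply Finset.card_image_of_injOn
            intro H1 h1 H2 h2 he
            rw [mem_coe, mem_shN] at h1 h2
            obtain ⟨_, G1, hG1, hHG1⟩ := h1
            obtain ⟨_, G2, hG2, hHG2⟩ := h2
            have hm1 : m ∉ H1 := fun h => (hF₁mem G1 hG1).2.1 (hHG1 h)
            have hm2 : m ∉ H2 := fun h => (hF₁mem G2 hG2).2.1 (hHG2 h)
            rw [← Finset.erase_insert hm1, he, Finset.erase_insert hm2]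
          have hshadow : (shN (k - b) F₀).card + (shN (k - 1 - b) F₁).card
              ≤ (shN (k - b) F).card := by
            rw [← himgcard, ← Finset.card_union_of_disjoint hdisj]
            exact Finset.card_le_card (Finset.union_subset hsub0 hsub1)
          calc F.card = F₀.card + F₁.card := hcard01
            _ ≤ (s - 1) ^ b * (shN (k - b) F₀).card
                + (s - 1) ^ b * (shN (k - 1 - b) F₁).card := Nat.add_le_add h₀ h₁
            _ = (s - 1) ^ b * ((shN (k - b) F₀).card + (shN (k - 1 - b) F₁).card) := by ring
            _ ≤ (s - 1) ^ b * (shN (k - b) F).card := Nat.mul_le_mul_left _ hshadow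

lemma M_eq {k s b : ℕ} (hs : 2 ≤ s) (hb1 : 1 ≤ b) (hbk : b ≤ k) :
    k * s - (b - 1) * (s - 1) - 1 = (s - 1) * (k - b + 1) + (k - 1) := by
  obtain ⟨c, hc⟩ : ∃ c, k = b + c := ⟨k - b, by omega⟩
  obtain ⟨t, ht⟩ : ∃ t, s = t + 2 := ⟨s - 2, by omega⟩
  obtain ⟨d, hd⟩ : ∃ d, b = d + 1 := ⟨b - 1, by omega⟩
  subst hc ht hd
  have h1 : (d + 1 + c) * (t + 2) = (d + 1 + c) * (t + 2) := rfl
  have h2 : d + 1 + c - (d + 1) + 1 = c + 1 := by omega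
  have h3 : (t + 2 - 1) = t + 1 := by omega
  have h4 : (d + 1 - 1) = d := by omega
  rw [h2, h3, h4]
  have h5 : (t + 1) * (c + 1) + (d + 1 + c - 1) + (d * (t + 1) + 1)
      = (d + 1 + c) * (t + 2) := by
    have : d + 1 + c - 1 = d + c := by omega
    rw [this]
    ring
  have h6 : d * (t + 1) + 1 ≤ (d + 1 + c) * (t + 2) := by
    have e1 : (d + 1 + c) * (t + 2) = d * (t + 2) + (1 + c) * (t + 2) := by ring
    have e2 : d * (t + 1) ≤ d * (t + 2) := Nat.mul_le_mul_left d (by omega)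
    have e3 : 0 < (1 + c) * (t + 2) := Nat.mul_pos (by omega) (by omega)
    linarith
  -- goal : A - (d)*(t+1) - 1 = B with A = (d+1+c)*(t+2)
  have h7 : (d + 1 + c) * (t + 2) - d * (t + 1) - 1
      = (d + 1 + c) * (t + 2) - (d * (t + 1) + 1) := by omega
  rw [h7]
  omega


end FranklAux

/-- **Generalised Frankl shadow inequality.** Let `k ≥ 1`, `s ≥ 2`, `1 ≤ b ≤ k`.
If `F` is a family of `k`-subsets of `[n]` such that every choice of `s` members
(not necessarily distinct) `F₁, …, F_s ∈ F` satisfies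
`|F₁ ∪ ⋯ ∪ F_s| ≤ k s - (b - 1)(s - 1) - 1`, then
`(s - 1)^b · |σ_{k-b}(F)| ≥ |F|`. -/
theorem generalized_shadow_inequality (k s b n : ℕ)
    (hk : 1 ≤ k) (hs : 2 ≤ s) (hb1 : 1 ≤ b) (hbk : b ≤ k) (hn : 0 < n)
    (F : Finset (Finset (Fin n))) (hF : ∀ A ∈ F, A.card = k)
    (hyp : ∀ f : Fin s → Finset (Fin n), (∀ i, f i ∈ F) →
      (Finset.univ.biUnion f).card ≤ k * s - (b - 1) * (s - 1) - 1) :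
    F.card ≤ (s - 1) ^ b * (shadow' n (k - b) F).card := by
  classical
  set ι : Finset (Fin n) → Finset ℕ := fun A => A.image Fin.val with hι
  have hιcard : ∀ A : Finset (Fin n), (ι A).card = A.card := fun A =>
    Finset.card_image_of_injective A Fin.val_injective
  have hιinj : Function.Injective ι := by
    intro A B h
    ext a
    constructor
    · intro ha
      have : (a : ℕ) ∈ ι B := by rw [← h]; exact Finset.mem_image_of_mem _ ha
      rw [hι] at this
      obtain ⟨b', hb', hb'e⟩ := Finset.mem_image.mp this
      rwa [← Fin.val_injective hb'e]
    · intro ha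
      have : (a : ℕ) ∈ ι A := by rw [h]; exact Finset.mem_image_of_mem _ ha
      rw [hι] at this
      obtain ⟨b', hb', hb'e⟩ := Finset.mem_image.mp this
      rwa [← Fin.val_injective hb'e]
  have hιmono : ∀ {A B : Finset (Fin n)}, A ⊆ B → ι A ⊆ ι B := fun h =>
    Finset.image_subset_image h
  set Fn := F.image ι with hFn
  have hcardn : ∀ A ∈ Fn, A.card = k := by
    intro A hA
    rw [hFn, Finset.mem_image] at hA
    obtain ⟨A₀, hA₀, rfl⟩ := hA
    rw [hιcard]
    exact hF A₀ hA₀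
  have hrangen : ∀ A ∈ Fn, A ⊆ range n := by
    intro A hA x hx
    rw [hFn, Finset.mem_image] at hA
    obtain ⟨A₀, _, rfl⟩ := hA
    rw [hι] at hx
    obtain ⟨a, _, rfl⟩ := Finset.mem_image.mp hx
    exact mem_range.mpr a.2
  have hypn : Hyp s ((s - 1) * (k - b + 1) + (k - 1)) Fn := by
    intro f hf
    choose g hg1 hg2 using fun t => Finset.mem_image.mp (hf t)
    have hUeq : Finset.univ.biUnion f = ι (Finset.univ.biUnion g) := by
      ext x
      rw [mem_biUnion, hι]
      simp only [Finset.mem_image, mem_biUnion]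
      constructor
      · rintro ⟨t, _, hx⟩
        rw [← hg2 t, hι] at hx
        obtain ⟨a, ha, rfl⟩ := Finset.mem_image.mp hx
        exact ⟨a, ⟨t, mem_univ t, ha⟩, rfl⟩
      · rintro ⟨a, ⟨t, _, ha⟩, rfl⟩
        refine ⟨t, mem_univ t, ?_⟩
        rw [← hg2 t, hι]
        exact Finset.mem_image_of_mem _ ha
    rw [hUeq, hιcard, ← M_eq hs hb1 hbk]
    exact hyp g hg1
  -- transfer shadow
  have hshadoweq : shN (k - b) Fn = (shadow' n (k - b) F).image ι := by
    ext G
    rw [mem_shN, Finset.mem_image]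
    constructor
    · rintro ⟨hGc, A, hA, hGA⟩
      rw [hFn, Finset.mem_image] at hA
      obtain ⟨A₀, hA₀, rfl⟩ := hA
      set H := A₀.filter (fun a : Fin n => (↑a : ℕ) ∈ G) with hH
      have hHι : ι H = G := by
        ext x
        rw [hι]
        simp only [Finset.mem_image, hH, mem_filter]
        constructor
        · rintro ⟨a, ⟨_, ha⟩, rfl⟩; exact ha
        · intro hx
          obtain ⟨a, ha, rfl⟩ := Finset.mem_image.mp (hGA hx)
          exact ⟨a, ⟨ha, hx⟩, rfl⟩
      refine ⟨H, ?_, hHι⟩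
      rw [shadow', mem_filter]
      refine ⟨mem_univ _, ?_, A₀, hA₀, Finset.filter_subset _ _⟩
      rw [← hιcard H, hHι]
      exact hGc
    · rintro ⟨H, hH, rfl⟩
      rw [shadow', mem_filter] at hH
      obtain ⟨_, hHc, A₀, hA₀, hsub⟩ := hH
      exact ⟨by rw [hιcard]; exact hHc, ι A₀,
        by rw [hFn]; exact Finset.mem_image_of_mem _ hA₀, hιmono hsub⟩
  have hcards : (shN (k - b) Fn).card = (shadow' n (k - b) F).card := by
    rw [hshadoweq]
    exact Finset.card_image_of_injective _ hιinj
  obtain ⟨F', p1, p2, p3, p4, p5, p6⟩ := exists_shifted s ((s - 1) * (k - b + 1) + (k - 1))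
    k b n hbk (fmeasure Fn) Fn le_rfl hcardn hrangen hypn
  have hmain := main (k + n) k b n s F' le_rfl hs hb1 hbk p1 p2 p4 p3
  calc F.card = Fn.card := (Finset.card_image_of_injective _ hιinj).symm
    _ = F'.card := p5.symm
    _ ≤ (s - 1) ^ b * (shN (k - b) F').card := hmain
    _ ≤ (s - 1) ^ b * (shN (k - b) Fn).card := Nat.mul_le_mul_left _ p6
    _ = (s - 1) ^ b * (shadow' n (k - b) F).card := by rw [hcards]
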